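/- Let m ≥ 1 and let a⁰, …, a^{m−1} and c⁰, …, c^{m−1} be bi-infinite real sequences. In the algebra of difference operators set D := Σ_{r=0}^{m−1} a^r 𝒯^r − 𝒯^m and E := Σ_{r=0}^{m−1} (𝒯^{−r} + 𝒯^{−m} ∘ a^r) ∘ c^r. Then 2·r(E·D) = −Σ_{r=0}^{m−1} Σ_{k=0}^{m−1} 𝒯^{−m} ∘ (a^r a^k c^r) ∘ 𝒯^k − Σ_{r=1}^{m−1} Σ_{k=0}^{r−1} 𝒯^{−r} ∘ (a^k c^r) ∘ 𝒯^k + Σ_{r=0}^{m−1} Σ_{k=r+1}^{m−1} 𝒯^{−r} ∘ (a^k c^r) ∘ 𝒯^k − Σ_{r=0}^{m−1} 𝒯^{−r} ∘ c^r ∘ 𝒯^m, where products of sequences are termwise. -/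

import Mathlib

noncomputable section

/-- A (pseudo-)difference operator, given by its coefficient sequences:
`a i j` is the `j`-th entry of the coefficient sequence of `𝒯^i`. -/
abbrev DOp : Type := ℤ → ℤ → ℝ

namespace DOp

/-- Product of difference operators, determined by `𝒯 ∘ a = (𝒯a) ∘ 𝒯`:
the coefficient of `𝒯^n` in `a * b` is `Σ_{i+j=n} a^i · 𝒯^i(b^j)`. -/
def mul (a b : DOp) : DOp := fun n j => ∑ᶠ i : ℤ, a i j * b (n - i) (j + i)

/-- The identity difference operator. -/
def one : DOp := fun n j => if n = 0 then 1 else 0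

/-- The r-matrix `r(Σ_i a^i 𝒯^i) = ½(Σ_{i>0} a^i 𝒯^i − Σ_{i<0} a^i 𝒯^i)`. -/
def rmat (a : DOp) : DOp := fun n j =>
  if 0 < n then a n j / 2 else if n < 0 then -(a n j) / 2 else 0

/-- A difference operator is a *finite* formal sum. -/
def FinSupp (a : DOp) : Prop := {i : ℤ | a i ≠ 0}.Finite

/-- `N`-periodicity of all coefficient sequences. -/
def Periodic (N : ℕ) (a : DOp) : Prop := ∀ i j, a i (j + (N : ℤ)) = a i j

/-- The trace of an `N`-periodic difference operator: `Tr D = Σ_{j=1}^N a^0_j`. -/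
def trace (N : ℕ) (a : DOp) : ℝ := ∑ j ∈ Finset.Icc (1 : ℤ) (N : ℤ), a 0 j

/-- The commutator `[A, B] = AB − BA` of difference operators. -/
def bracket (a b : DOp) : DOp := mul a b - mul b a

/-- An order-zero operator: termwise multiplication by the sequence `α`. -/
def ord0 (α : ℤ → ℝ) : DOp := fun n j => if n = 0 then α j else 0

/-- The operator `c ∘ 𝒯^k` for a sequence `c`. -/
def singleOp (k : ℤ) (c : ℤ → ℝ) : DOp := fun n j => if n = k then c j else 0

/-- The pure shift operator `𝒯^k`. -/
def Tpow (k : ℤ) : DOp := singleOp k fun _ => 1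

end DOp

/-- The operator `D = Σ_{r=0}^{m−1} a^r 𝒯^r − 𝒯^m`. -/
def Dof (m : ℕ) (a : ℕ → ℤ → ℝ) : DOp :=
  (∑ r ∈ Finset.range m, DOp.singleOp (r : ℤ) (a r)) - DOp.Tpow (m : ℤ)

/-- The operator `E = Σ_{r=0}^{m−1} (𝒯^{−r} + 𝒯^{−m} ∘ a^r) ∘ c^r`. -/
def Eof (m : ℕ) (a c : ℕ → ℤ → ℝ) : DOp :=
  ∑ r ∈ Finset.range m,
    DOp.mul (DOp.Tpow (-(r : ℤ)) + DOp.mul (DOp.Tpow (-(m : ℤ))) (DOp.singleOp 0 (a r)))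
      (DOp.singleOp 0 (c r))

section Aux
open DOp

lemma mulSL (p : ℤ) (e : ℤ → ℝ) (b : DOp) :
    DOp.mul (DOp.singleOp p e) b = fun n j => e j * b (n - p) (j + p) := by
  funext n j
  show ∑ᶠ i : ℤ, (if i = p then e j else 0) * b (n - i) (j + i) = _
  rw [finsum_eq_single _ p]
  · simp
  · intro i hi; simp [hi]

lemma mulSR (q : ℤ) (d : ℤ → ℝ) (a : DOp) :
    DOp.mul a (DOp.singleOp q d) = fun n j => a (n - q) j * d (j + (n - q)) := by
  funext n j
  show ∑ᶠ i : ℤ, a i j * (if n - i = q then d (j + i) else 0) = _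
  rw [finsum_eq_single _ (n - q)]
  · simp
  · intro i hi
    have : n - i ≠ q := by omega
    simp [this]

lemma mulSS (p q : ℤ) (e d : ℤ → ℝ) :
    DOp.mul (DOp.singleOp p e) (DOp.singleOp q d)
      = DOp.singleOp (p + q) (fun j => e j * d (j + p)) := by
  rw [mulSL]
  funext n j
  simp only [DOp.singleOp]
  split_ifs with h1 h2 h2 <;> first | rfl | omega | simp

lemma singleOp_congr {p q : ℤ} {e d : ℤ → ℝ} (h : p = q) (h2 : ∀ j, e j = d j) :
    DOp.singleOp p e = DOp.singleOp q d := by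
  subst h; funext n j; simp only [DOp.singleOp, h2]

end Aux
lemma finSupp_singleOp (p : ℤ) (e : ℤ → ℝ) : DOp.FinSupp (DOp.singleOp p e) := by
  apply Set.Finite.subset (Set.finite_singleton p)
  intro i hi
  simp only [Set.mem_setOf_eq, DOp.singleOp] at hi
  by_contra h
  simp only [Set.mem_singleton_iff] at h
  exact hi (by funext j; simp [DOp.singleOp, h])

lemma finSupp_add {x y : DOp} (hx : DOp.FinSupp x) (hy : DOp.FinSupp y) :
    DOp.FinSupp (x + y) := by
  apply Set.Finite.subset (hx.union hy)
  intro i hi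
  simp only [Set.mem_setOf_eq, Set.mem_union] at hi ⊢
  by_contra h
  push_neg at h
  obtain ⟨h1, h2⟩ := h
  exact hi (by simp [Pi.add_apply, h1, h2])

lemma mul_addL {x y : DOp} (z : DOp) (hx : DOp.FinSupp x) (hy : DOp.FinSupp y) :
    DOp.mul (x + y) z = DOp.mul x z + DOp.mul y z := by
  funext n j
  show ∑ᶠ i : ℤ, (x i j + y i j) * z (n - i) (j + i) = _
  have hsup : ∀ (w : DOp), DOp.FinSupp w →
      (Function.support fun i => w i j * z (n - i) (j + i)).Finite := by
    intro w hw
    apply Set.Finite.subset hw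
    intro i hi
    simp only [Function.mem_support] at hi
    intro h
    rw [h] at hi
    simp at hi
  simp only [add_mul]
  rw [finsum_add_distrib (hsup x hx) (hsup y hy)]
  rfl

lemma finSupp_sum {ι : Type*} (s : Finset ι) (f : ι → DOp)
    (hf : ∀ i ∈ s, DOp.FinSupp (f i)) : DOp.FinSupp (∑ i ∈ s, f i) := by
  classical
  induction s using Finset.induction_on with
  | empty => simpa [DOp.FinSupp] using Set.finite_empty
  | insert _ _ h ih =>
      rw [Finset.sum_insert h]
      exact finSupp_add (hf _ (Finset.mem_insert_self _ _))
        (ih fun i hi => hf i (Finset.mem_insert_of_mem hi))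

lemma mul_sumL {ι : Type*} (s : Finset ι) (f : ι → DOp) (z : DOp)
    (hf : ∀ i ∈ s, DOp.FinSupp (f i)) :
    DOp.mul (∑ i ∈ s, f i) z = ∑ i ∈ s, DOp.mul (f i) z := by
  classical
  induction s using Finset.induction_on with
  | empty =>
      simp only [Finset.sum_empty]
      funext n j
      show ∑ᶠ i : ℤ, (0:ℝ) * z (n - i) (j + i) = 0
      simp
  | insert _ _ h ih =>
      rw [Finset.sum_insert h, Finset.sum_insert h,
        mul_addL z (hf _ (Finset.mem_insert_self _ _))
          (finSupp_sum _ _ fun i hi => hf i (Finset.mem_insert_of_mem hi)),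
        ih fun i hi => hf i (Finset.mem_insert_of_mem hi)]

lemma mulS_subsum {ι : Type*} (p : ℤ) (e : ℤ → ℝ) (s : Finset ι) (f : ι → DOp) (t : DOp) :
    DOp.mul (DOp.singleOp p e) ((∑ i ∈ s, f i) - t)
      = (∑ i ∈ s, DOp.mul (DOp.singleOp p e) (f i)) - DOp.mul (DOp.singleOp p e) t := by
  simp only [mulSL]
  funext n j
  simp only [Pi.sub_apply, Finset.sum_apply, mul_sub, Finset.mul_sum]
/-- `2 • rmat` as a function. -/
def Lop (x : DOp) : DOp := (2 : ℝ) • DOp.rmat x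

lemma Lop_apply (x : DOp) (n j : ℤ) :
    Lop x n j = if 0 < n then x n j else if n < 0 then -x n j else 0 := by
  simp only [Lop, DOp.rmat, Pi.smul_apply, smul_eq_mul]
  split_ifs <;> ring

lemma Lop_add (x y : DOp) : Lop (x + y) = Lop x + Lop y := by
  funext n j
  simp only [Pi.add_apply, Lop_apply]
  split_ifs <;> ring

lemma Lop_sub (x y : DOp) : Lop (x - y) = Lop x - Lop y := by
  funext n j
  simp only [Pi.sub_apply, Lop_apply]
  split_ifs <;> ring

lemma Lop_sum {ι : Type*} (s : Finset ι) (f : ι → DOp) :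
    Lop (∑ i ∈ s, f i) = ∑ i ∈ s, Lop (f i) := by
  classical
  induction s using Finset.induction_on with
  | empty =>
      simp only [Finset.sum_empty]
      funext n j
      simp only [Lop_apply, Pi.zero_apply]
      split_ifs <;> ring
  | insert _ _ h ih => rw [Finset.sum_insert h, Finset.sum_insert h, Lop_add, ih]

lemma Lop_single_pos {p : ℤ} (hp : 0 < p) (e : ℤ → ℝ) :
    Lop (DOp.singleOp p e) = DOp.singleOp p e := by
  funext n j
  simp only [Lop_apply, DOp.singleOp]
  split_ifs <;> first | rfl | omega | simp

lemma Lop_single_neg {p : ℤ} (hp : p < 0) (e : ℤ → ℝ) :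
    Lop (DOp.singleOp p e) = -(DOp.singleOp p e) := by
  funext n j
  simp only [Lop_apply, DOp.singleOp, Pi.neg_apply]
  split_ifs <;> first | rfl | omega | simp

lemma Lop_single_zero (e : ℤ → ℝ) : Lop (DOp.singleOp 0 e) = 0 := by
  funext n j
  simp only [Lop_apply, DOp.singleOp, Pi.zero_apply]
  split_ifs <;> first | rfl | omega | simp
lemma TmulT (p k : ℤ) (f : ℤ → ℝ) :
    DOp.mul (DOp.Tpow p) (DOp.mul (DOp.singleOp 0 f) (DOp.Tpow k))
      = DOp.singleOp (p + k) (fun j => f (j + p)) := by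
  rw [DOp.Tpow, DOp.Tpow, mulSS, mulSS]
  exact singleOp_congr (by ring) (fun j => by simp)

lemma Eof_eq (m : ℕ) (a c : ℕ → ℤ → ℝ) :
    Eof m a c = ∑ r ∈ Finset.range m,
      (DOp.singleOp (-(r : ℤ)) (fun j => c r (j + -(r : ℤ)))
        + DOp.singleOp (-(m : ℤ)) (fun j => a r (j + -(m : ℤ)) * c r (j + -(m : ℤ)))) := by
  unfold Eof
  refine Finset.sum_congr rfl fun r hr => ?_
  have hrm : (r : ℤ) ≠ (m : ℤ) := by
    have := Finset.mem_range.mp hr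
    exact_mod_cast this.ne
  rw [DOp.Tpow, DOp.Tpow, mulSS, mulSR]
  funext n j
  simp only [Pi.add_apply, DOp.singleOp, sub_zero, add_zero, one_mul]
  split_ifs <;> first | (exfalso; omega) | (subst_vars; ring) | simp

lemma mulED (m : ℕ) (a c : ℕ → ℤ → ℝ) :
    DOp.mul (Eof m a c) (Dof m a) = ∑ r ∈ Finset.range m,
      (((∑ k ∈ Finset.range m,
            DOp.singleOp (-(r : ℤ) + k) (fun j => c r (j + -(r : ℤ)) * a k (j + -(r : ℤ))))
          - DOp.singleOp (-(r : ℤ) + m) (fun j => c r (j + -(r : ℤ)) * 1))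
        + ((∑ k ∈ Finset.range m,
            DOp.singleOp (-(m : ℤ) + k)
              (fun j => (a r (j + -(m : ℤ)) * c r (j + -(m : ℤ))) * a k (j + -(m : ℤ))))
          - DOp.singleOp (-(m : ℤ) + m)
              (fun j => (a r (j + -(m : ℤ)) * c r (j + -(m : ℤ))) * 1))) := by
  rw [Eof_eq,
    mul_sumL _ _ _ (fun r _ => finSupp_add (finSupp_singleOp _ _) (finSupp_singleOp _ _))]
  refine Finset.sum_congr rfl fun r _ => ?_
  rw [mul_addL _ (finSupp_singleOp _ _) (finSupp_singleOp _ _)]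
  unfold Dof DOp.Tpow
  rw [mulS_subsum, mulS_subsum]
  simp only [mulSS]
lemma Lop_single_zero' {p : ℤ} (hp : p = 0) (e : ℤ → ℝ) : Lop (DOp.singleOp p e) = 0 := by
  subst hp; exact Lop_single_zero e

lemma Ico_range {γ : Type*} [AddCommMonoid γ] (m : ℕ) (g : ℕ → ℕ → γ) :
    ∑ r ∈ Finset.Ico 1 m, ∑ k ∈ Finset.range r, g r k
      = ∑ r ∈ Finset.range m, ∑ k ∈ Finset.range r, g r k := by
  apply Finset.sum_subset
  · intro x hx
    exact Finset.mem_range.mpr (Finset.mem_Ico.mp hx).2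
  · intro x hx hnx
    have hx0 : x = 0 := by
      simp only [Finset.mem_Ico, Finset.mem_range] at hx hnx
      omega
    subst hx0; simp
/-- The explicit expansion of `2·r(E·D)` where
`D = Σ_{r<m} a^r 𝒯^r − 𝒯^m` and `E = Σ_{r<m} (𝒯^{−r} + 𝒯^{−m}∘a^r)∘c^r`. -/
theorem stmt14 (m : ℕ) (hm : 1 ≤ m) (a c : ℕ → ℤ → ℝ) :
    (2 : ℝ) • DOp.rmat (DOp.mul (Eof m a c) (Dof m a))
      = -(∑ r ∈ Finset.range m, ∑ k ∈ Finset.range m,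
            DOp.mul (DOp.Tpow (-(m : ℤ)))
              (DOp.mul (DOp.singleOp 0 fun j => a r j * a k j * c r j) (DOp.Tpow (k : ℤ))))
        - (∑ r ∈ Finset.Ico 1 m, ∑ k ∈ Finset.range r,
            DOp.mul (DOp.Tpow (-(r : ℤ)))
              (DOp.mul (DOp.singleOp 0 fun j => a k j * c r j) (DOp.Tpow (k : ℤ))))
        + (∑ r ∈ Finset.range m, ∑ k ∈ Finset.Ico (r + 1) m,
            DOp.mul (DOp.Tpow (-(r : ℤ)))
              (DOp.mul (DOp.singleOp 0 fun j => a k j * c r j) (DOp.Tpow (k : ℤ))))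
        - (∑ r ∈ Finset.range m,
            DOp.mul (DOp.Tpow (-(r : ℤ)))
              (DOp.mul (DOp.singleOp 0 (c r)) (DOp.Tpow (m : ℤ)))) := by
  show Lop (DOp.mul (Eof m a c) (Dof m a)) = _
  rw [mulED, Lop_sum]
  simp only [TmulT]
  rw [Ico_range]
  rw [← Finset.sum_neg_distrib, ← Finset.sum_sub_distrib, ← Finset.sum_add_distrib,
    ← Finset.sum_sub_distrib]
  refine Finset.sum_congr rfl fun r hr => ?_
  have hrm : r < m := Finset.mem_range.mp hr
  rw [Lop_add, Lop_sub, Lop_sub, Lop_sum, Lop_sum]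
  have hsplit : ∀ h : ℕ → DOp, ∑ k ∈ Finset.range m, h k
      = ∑ k ∈ Finset.range r, h k + h r + ∑ k ∈ Finset.Ico (r + 1) m, h k := by
    intro h
    rw [Finset.range_eq_Ico, ← Finset.sum_Ico_consecutive h (Nat.zero_le (r + 1)) (by omega),
      ← Finset.range_eq_Ico, Finset.sum_range_succ]
  rw [hsplit]
  have e1 : ∑ k ∈ Finset.range r,
        Lop (DOp.singleOp (-(r:ℤ) + k) fun j => c r (j + -(r:ℤ)) * a k (j + -(r:ℤ)))
      = -∑ k ∈ Finset.range r,
          DOp.singleOp (-(r:ℤ) + k) fun j => a k (j + -(r:ℤ)) * c r (j + -(r:ℤ)) := by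
    rw [← Finset.sum_neg_distrib]
    refine Finset.sum_congr rfl fun k hk => ?_
    have hk' : k < r := Finset.mem_range.mp hk
    rw [Lop_single_neg (by omega)]
    exact congrArg Neg.neg (singleOp_congr rfl fun j => by ring)
  have e2 : Lop (DOp.singleOp (-(r:ℤ) + r) fun j => c r (j + -(r:ℤ)) * a r (j + -(r:ℤ))) = 0 :=
    Lop_single_zero' (by ring) _
  have e3 : ∑ k ∈ Finset.Ico (r+1) m,
        Lop (DOp.singleOp (-(r:ℤ) + k) fun j => c r (j + -(r:ℤ)) * a k (j + -(r:ℤ)))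
      = ∑ k ∈ Finset.Ico (r+1) m,
          DOp.singleOp (-(r:ℤ) + k) fun j => a k (j + -(r:ℤ)) * c r (j + -(r:ℤ)) := by
    refine Finset.sum_congr rfl fun k hk => ?_
    have hk' : r + 1 ≤ k := (Finset.mem_Ico.mp hk).1
    rw [Lop_single_pos (by omega)]
    exact singleOp_congr rfl fun j => by ring
  have e4 : Lop (DOp.singleOp (-(r:ℤ) + m) fun j => c r (j + -(r:ℤ)) * 1)
      = DOp.singleOp (-(r:ℤ) + m) fun j => c r (j + -(r:ℤ)) := by
    rw [Lop_single_pos (by omega)]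
    exact singleOp_congr rfl fun j => by ring
  have e5 : ∑ k ∈ Finset.range m,
        Lop (DOp.singleOp (-(m:ℤ) + k)
          fun j => a r (j + -(m:ℤ)) * c r (j + -(m:ℤ)) * a k (j + -(m:ℤ)))
      = -∑ k ∈ Finset.range m,
          DOp.singleOp (-(m:ℤ) + k)
            fun j => a r (j + -(m:ℤ)) * a k (j + -(m:ℤ)) * c r (j + -(m:ℤ)) := by
    rw [← Finset.sum_neg_distrib]
    refine Finset.sum_congr rfl fun k hk => ?_
    have hk' : k < m := Finset.mem_range.mp hk
    rw [Lop_single_neg (by omega)]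
    exact congrArg Neg.neg (singleOp_congr rfl fun j => by ring)
  have e6 : Lop (DOp.singleOp (-(m:ℤ) + m)
      fun j => a r (j + -(m:ℤ)) * c r (j + -(m:ℤ)) * 1) = 0 :=
    Lop_single_zero' (by ring) _
  rw [e1, e2, e3, e4, e5, e6]
  abel
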